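/- The compaction operation preserves the early-stop read invariant: if before merging levels L_i and L_{i+1} every pair of same-key records across any two levels satisfies 'lower level index implies larger timestamp', then after replacing L_i and L_{i+1} by the empty level and their merged union at index i+1, the invariant still holds. -/
import Mathlib


abbrev Rec := ℕ × ℕ × ℕ

/-- Levels of the LSM tree: a finite multiset of records per level index. -/
abbrev Levels := ℕ → Multiset Rec

/-- The cross-level early-stop read invariant: same-key records at a
lower-indexed level have strictly larger timestamps. -/
def CrossInv (s : Levels) : Prop :=
  ∀ i j, i < j → ∀ r ∈ s i, ∀ r' ∈ s j, r.1 = r'.1 → r'.2.2 < r.2.2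

/-- Compaction of levels `i` and `i+1`: level `i` becomes empty and level
`i+1` becomes the multiset union of the old levels `i` and `i+1`. -/
def compaction (i : ℕ) (s : Levels) : Levels := fun j =>
  if j = i then 0 else if j = i + 1 then s i + s (i + 1) else s j

/-- Compaction preserves the early-stop read invariant. -/
theorem compaction_preserves_invariant (s : Levels) (i : ℕ)
    (h : CrossInv s) : CrossInv (compaction i s) := by
  intro a b hab r hr r' hr' hkey
  simp only [compaction] at hr hr'
  split_ifs at hr hr'
  all_goals try exact absurd hr (Multiset.notMem_zero r)
  all_goals try exact absurd hr' (Multiset.notMem_zero r')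
  all_goals try omega
  · rcases Multiset.mem_add.mp hr with hr | hr
    · exact h i b (by omega) r hr r' hr' hkey
    · exact h (i+1) b (by omega) r hr r' hr' hkey
  · rcases Multiset.mem_add.mp hr' with hr' | hr'
    · exact h a i (by omega) r hr r' hr' hkey
    · exact h a (i+1) (by omega) r hr r' hr' hkey
  · exact h a b hab r hr r' hr' hkey
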